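/- If G is a finite graph and U is a set of vertices such that deleting U from G removes all cycles (i.e., G \ U is a forest), then c(G) ≤ 2^{|U|}. -/

import Mathlib

open Classical

variable {V : Type*}

/-- A finset of vertices is independent if no two of its members are adjacent. -/
def IsIndepSet (G : SimpleGraph V) (s : Finset V) : Prop :=
  ∀ u ∈ s, ∀ v ∈ s, ¬ G.Adj u v

/-- The set of faces of the independence complex of `G` (including the empty face). -/
def IndFaces (G : SimpleGraph V) : Set (Finset V) :=
  {s | IsIndepSet G s}

/-- `P` is a matching on the face poset `Δ`: a set of disjoint covering pairs. -/
def IsPosetMatching (Δ : Set (Finset V)) (P : Set (Finset V × Finset V)) : Prop :=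
  (∀ p ∈ P, p.1 ∈ Δ ∧ p.2 ∈ Δ ∧ p.1 ⊆ p.2 ∧ p.2.card = p.1.card + 1) ∧
  (∀ p ∈ P, ∀ q ∈ P, p ≠ q → p.1 ≠ q.1 ∧ p.1 ≠ q.2 ∧ p.2 ≠ q.1 ∧ p.2 ≠ q.2)

/-- A cycle in a matching: distinct matched pairs `{σ₁⊂τ₁},…,{σₙ⊂τₙ}`, `n > 1`,
with `σ_{i+1} ⊂ τ_i` for `i < n` and `σ₁ ⊂ τₙ`. -/
def MatchingHasCycle (P : Set (Finset V × Finset V)) : Prop :=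
  ∃ n : ℕ, 2 ≤ n ∧ ∃ f : ℕ → Finset V × Finset V,
    (∀ i < n, f i ∈ P) ∧ Set.InjOn f (Set.Iio n) ∧
    (∀ i, i + 1 < n → (f (i + 1)).1 ⊂ (f i).2) ∧ (f 0).1 ⊂ (f (n - 1)).2

/-- An acyclic (Morse) matching on the face poset `Δ`. -/
def IsAcyclicMatching (Δ : Set (Finset V)) (P : Set (Finset V × Finset V)) : Prop :=
  IsPosetMatching Δ P ∧ ¬ MatchingHasCycle P

/-- The critical (unmatched) faces of `Δ` with respect to `P`. -/
def criticalSet (Δ : Set (Finset V)) (P : Set (Finset V × Finset V)) : Set (Finset V) :=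
  {s ∈ Δ | ∀ p ∈ P, s ≠ p.1 ∧ s ≠ p.2}

/-- `cInvariant G` is the minimal number of critical cells in an acyclic matching on the
face poset of the independence complex of `G`. -/
noncomputable def cInvariant (G : SimpleGraph V) : ℕ :=
  sInf {n | ∃ P, IsAcyclicMatching (IndFaces G) P ∧ (criticalSet (IndFaces G) P).ncard = n}

/-- Matching everything with an "isolated" vertex `v`: no critical cells. -/
lemma iso_matching (Δ : Set (Finset V)) (v : V)
    (h1 : ∀ s ∈ Δ, v ∉ s → insert v s ∈ Δ)
    (h2 : ∀ s ∈ Δ, v ∈ s → s.erase v ∈ Δ) :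
    ∃ P, IsAcyclicMatching Δ P ∧ criticalSet Δ P = ∅ := by
  set P : Set (Finset V × Finset V) := {p | ∃ s ∈ Δ, v ∉ s ∧ p = (s, insert v s)} with hP
  have hmemP : ∀ p ∈ P, v ∉ p.1 ∧ p.2 = insert v p.1 ∧ p.1 ∈ Δ := by
    rintro p ⟨s, hs, hvs, rfl⟩
    exact ⟨hvs, rfl, hs⟩
  refine ⟨P, ⟨⟨?_, ?_⟩, ?_⟩, ?_⟩
  · rintro p ⟨s, hs, hvs, rfl⟩
    exact ⟨hs, h1 s hs hvs, Finset.subset_insert _ _, Finset.card_insert_of_notMem hvs⟩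
  · rintro p ⟨s, hs, hvs, rfl⟩ q ⟨t, ht, hvt, rfl⟩ hne
    have hst : s ≠ t := by rintro rfl; exact hne rfl
    refine ⟨hst, ?_, ?_, ?_⟩
    · intro h
      exact hvs (by rw [show s = insert v t from h]; exact Finset.mem_insert_self v t)
    · intro h
      exact hvt (by rw [show t = insert v s from h.symm]; exact Finset.mem_insert_self v s)
    · intro h
      apply hst
      have := congrArg (Finset.erase · v) h
      simpa [Finset.erase_insert hvs, Finset.erase_insert hvt] using this
  · rintro ⟨n, hn, f, hmem, hinj, hstep, hwrap⟩
    have hsub : ∀ i, i + 1 < n → (f (i + 1)).1 ⊆ (f i).1 := by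
      intro i hi
      obtain ⟨hv1, he1, _⟩ := hmemP _ (hmem i (Nat.lt_of_succ_lt hi))
      obtain ⟨hv2, _, _⟩ := hmemP _ (hmem (i + 1) hi)
      intro x hx
      have := (hstep i hi).1 hx
      rw [he1, Finset.mem_insert] at this
      rcases this with rfl | h
      · exact absurd hx hv2
      · exact h
    have hchain : ∀ i j, i ≤ j → j < n → (f j).1 ⊆ (f i).1 := by
      intro i j hij hjn
      induction j, hij using Nat.le_induction with
      | base => exact Finset.Subset.refl _
      | succ m hm ih =>
        exact (hsub m hjn).trans (ih (Nat.lt_of_succ_lt hjn))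
    have hwrapsub : (f 0).1 ⊆ (f (n - 1)).1 := by
      obtain ⟨hv1, he1, _⟩ := hmemP _ (hmem (n - 1) (Nat.sub_lt (by omega) one_pos))
      obtain ⟨hv2, _, _⟩ := hmemP _ (hmem 0 (by omega))
      intro x hx
      have := hwrap.1 hx
      rw [he1, Finset.mem_insert] at this
      rcases this with rfl | h
      · exact absurd hx hv2
      · exact h
    have h01 : (f 0).1 = (f 1).1 := by
      have a1 : (f 1).1 ⊆ (f 0).1 := hsub 0 (by omega)
      have a2 : (f (n-1)).1 ⊆ (f 1).1 := hchain 1 (n-1) (by omega) (by omega)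
      exact Finset.Subset.antisymm (hwrapsub.trans a2) a1
    have hfe : f 0 = f 1 := by
      have he0 := (hmemP _ (hmem 0 (by omega))).2.1
      have he1 := (hmemP _ (hmem 1 (by omega))).2.1
      exact Prod.ext h01 (by rw [he0, he1, h01])
    exact absurd (hinj (by simp; omega : (0:ℕ) ∈ Set.Iio n) (by simp; omega : (1:ℕ) ∈ Set.Iio n) hfe) (by omega)
  · apply Set.eq_empty_iff_forall_notMem.mpr
    rintro s ⟨hs, hcrit⟩
    by_cases hv : v ∈ s
    · exact (hcrit (s.erase v, s)
        ⟨s.erase v, h2 s hs hv, Finset.notMem_erase _ _, by rw [Finset.insert_erase hv]⟩).2 rfl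
    · exact (hcrit (s, insert v s) ⟨s, hs, hv, rfl⟩).1 rfl

/-- Combining matchings on the link and deletion of a vertex `v`. -/
lemma combine_matching (Δ : Set (Finset V)) (v : V) (P₁ P₂ : Set (Finset V × Finset V))
    (h1 : IsAcyclicMatching {s ∈ Δ | v ∉ s} P₁)
    (h2 : IsAcyclicMatching {s | v ∉ s ∧ insert v s ∈ Δ} P₂) :
    ∃ P, IsAcyclicMatching Δ P ∧
      criticalSet Δ P ⊆ criticalSet {s ∈ Δ | v ∉ s} P₁ ∪
        (insert v) '' criticalSet {s | v ∉ s ∧ insert v s ∈ Δ} P₂ := by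
  classical
  set L : Finset V × Finset V → Finset V × Finset V := fun p => (insert v p.1, insert v p.2)
    with hL
  set P : Set (Finset V × Finset V) := P₁ ∪ L '' P₂ with hP
  -- basic facts about members
  have hP1 : ∀ p ∈ P₁, p.1 ∈ Δ ∧ p.2 ∈ Δ ∧ v ∉ p.1 ∧ v ∉ p.2 ∧ p.1 ⊆ p.2 ∧
      p.2.card = p.1.card + 1 := by
    intro p hp
    obtain ⟨⟨a1, a2⟩, ⟨b1, b2⟩, c, d⟩ := h1.1.1 p hp
    exact ⟨a1, b1, a2, b2, c, d⟩
  have hP2 : ∀ p ∈ P₂, v ∉ p.1 ∧ v ∉ p.2 ∧ insert v p.1 ∈ Δ ∧ insert v p.2 ∈ Δ ∧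
      p.1 ⊆ p.2 ∧ p.2.card = p.1.card + 1 := by
    intro p hp
    obtain ⟨⟨a1, a2⟩, ⟨b1, b2⟩, c, d⟩ := h2.1.1 p hp
    exact ⟨a1, b1, a2, b2, c, d⟩
  have hinsinj : ∀ a b : Finset V, v ∉ a → v ∉ b → insert v a = insert v b → a = b := by
    intro a b ha hb h
    have := congrArg (Finset.erase · v) h
    simpa [Finset.erase_insert ha, Finset.erase_insert hb] using this
  refine ⟨P, ⟨⟨?_, ?_⟩, ?_⟩, ?_⟩
  · rintro p (hp | ⟨q, hq, rfl⟩)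
    · obtain ⟨a, b, _, _, c, d⟩ := hP1 p hp
      exact ⟨a, b, c, d⟩
    · obtain ⟨q1, q2, q3, q4, q5, q6⟩ := hP2 q hq
      refine ⟨q3, q4, Finset.insert_subset_insert _ q5, ?_⟩
      rw [Finset.card_insert_of_notMem q1, Finset.card_insert_of_notMem q2, q6]
  · rintro p (hp | ⟨p', hp', rfl⟩) q (hq | ⟨q', hq', rfl⟩) hne
    · exact h1.1.2 p hp q hq hne
    · obtain ⟨_, _, c1, c2, _, _⟩ := hP1 p hp
      obtain ⟨d1, d2, _, _, _, _⟩ := hP2 q' hq'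
      refine ⟨?_, ?_, ?_, ?_⟩ <;>
        · intro h
          first
          | exact c1 (by rw [h]; exact Finset.mem_insert_self _ _)
          | exact c2 (by rw [h]; exact Finset.mem_insert_self _ _)
    · obtain ⟨_, _, c1, c2, _, _⟩ := hP1 q hq
      obtain ⟨d1, d2, _, _, _, _⟩ := hP2 p' hp'
      refine ⟨?_, ?_, ?_, ?_⟩ <;>
        · intro h
          first
          | exact c1 (by rw [← h]; exact Finset.mem_insert_self _ _)
          | exact c2 (by rw [← h]; exact Finset.mem_insert_self _ _)
    · have hne' : p' ≠ q' := by rintro rfl; exact hne rfl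
      obtain ⟨a1, a2, _, _, _, _⟩ := hP2 p' hp'
      obtain ⟨b1, b2, _, _, _, _⟩ := hP2 q' hq'
      obtain ⟨e1, e2, e3, e4⟩ := h2.1.2 p' hp' q' hq' hne'
      exact ⟨fun h => e1 (hinsinj _ _ a1 b1 h), fun h => e2 (hinsinj _ _ a1 b2 h),
        fun h => e3 (hinsinj _ _ a2 b1 h), fun h => e4 (hinsinj _ _ a2 b2 h)⟩
  · rintro ⟨n, hn, f, hmem, hinj, hstep, hwrap⟩
    by_cases hall : ∀ i < n, f i ∈ L '' P₂
    · -- descend to a cycle in P₂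
      set g : ℕ → Finset V × Finset V := fun i => ((f i).1.erase v, (f i).2.erase v) with hg
      have hgi : ∀ i < n, g i ∈ P₂ ∧ f i = (insert v (g i).1, insert v (g i).2) ∧
          v ∈ (f i).1 ∧ v ∈ (f i).2 := by
        intro i hi
        obtain ⟨q, hq, hfi⟩ := hall i hi
        obtain ⟨q1, q2, _, _, _, _⟩ := hP2 q hq
        have e1 : (f i).1 = insert v q.1 := by rw [← hfi]
        have e2 : (f i).2 = insert v q.2 := by rw [← hfi]
        have g1 : (g i).1 = q.1 := by simp [hg, e1, Finset.erase_insert q1]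
        have g2 : (g i).2 = q.2 := by simp [hg, e2, Finset.erase_insert q2]
        refine ⟨by rw [show g i = q from Prod.ext g1 g2]; exact hq, ?_, ?_, ?_⟩
        · rw [g1, g2, ← e1, ← e2]
        · rw [e1]; exact Finset.mem_insert_self _ _
        · rw [e2]; exact Finset.mem_insert_self _ _
      apply h2.2
      refine ⟨n, hn, g, fun i hi => (hgi i hi).1, ?_, ?_, ?_⟩
      · intro i hi j hj hgij
        apply hinj hi hj
        rw [(hgi i hi).2.1, (hgi j hj).2.1, hgij]
      · intro i hi
        have hs := hstep i hi
        obtain ⟨_, _, hv1, _⟩ := hgi (i+1) hi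
        obtain ⟨_, _, _, hv2⟩ := hgi i (Nat.lt_of_succ_lt hi)
        constructor
        · exact Finset.erase_subset_erase _ hs.1
        · intro hcon
          apply hs.2
          intro x hx
          by_cases hxv : x = v
          · subst hxv; exact hv1
          · exact Finset.mem_of_mem_erase (hcon (Finset.mem_erase_of_ne_of_mem hxv hx))
      · have hs := hwrap
        obtain ⟨_, _, hv1, _⟩ := hgi 0 (by omega)
        obtain ⟨_, _, _, hv2⟩ := hgi (n-1) (by omega)
        constructor
        · exact Finset.erase_subset_erase _ hs.1
        · intro hcon
          apply hs.2
          intro x hx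
          by_cases hxv : x = v
          · subst hxv; exact hv1
          · exact Finset.mem_of_mem_erase (hcon (Finset.mem_erase_of_ne_of_mem hxv hx))
    · -- some pair is in P₁; then all are, giving a cycle in P₁
      push_neg at hall
      obtain ⟨i₀, hi₀, hfi₀⟩ := hall
      have hfi₀' : f i₀ ∈ P₁ := by
        rcases hmem i₀ hi₀ with h | h
        · exact h
        · exact absurd h hfi₀
      have hnotv : ∀ p ∈ P₁, v ∉ p.2 := fun p hp => (hP1 p hp).2.2.2.1
      have hmemv : ∀ p ∈ P, v ∉ p.1 → p ∈ P₁ := by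
        rintro p (hp | ⟨q, hq, rfl⟩) hv
        · exact hp
        · exact absurd (Finset.mem_insert_self v q.1) hv
      have key1 : ∀ i, i + 1 < n → f i ∈ P₁ → f (i + 1) ∈ P₁ := by
        intro i hi hfi
        apply hmemv _ (hmem (i+1) hi)
        intro hv
        exact hnotv _ hfi ((hstep i hi).1 hv)
      have mono : ∀ j, j < n → i₀ ≤ j → f j ∈ P₁ := by
        intro j hj hij
        induction j, hij using Nat.le_induction with
        | base => exact hfi₀'
        | succ m hm ih => exact key1 m hj (ih (Nat.lt_of_succ_lt hj))
      have hlast : f (n-1) ∈ P₁ := mono (n-1) (by omega) (by omega)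
      have h0 : f 0 ∈ P₁ := by
        apply hmemv _ (hmem 0 (by omega))
        intro hv
        exact hnotv _ hlast (hwrap.1 hv)
      have mono0 : ∀ j, j < n → f j ∈ P₁ := by
        intro j hj
        induction j with
        | zero => exact h0
        | succ m ih => exact key1 m hj (ih (Nat.lt_of_succ_lt hj))
      exact h1.2 ⟨n, hn, f, mono0, hinj, hstep, hwrap⟩
  · rintro s ⟨hs, hcrit⟩
    by_cases hv : v ∈ s
    · right
      refine ⟨s.erase v, ⟨⟨Finset.notMem_erase _ _, by rwa [Finset.insert_erase hv]⟩, ?_⟩,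
        Finset.insert_erase hv⟩
      intro p hp
      have hcp := hcrit (L p) (Or.inr ⟨p, hp, rfl⟩)
      obtain ⟨p1, p2, _, _, _, _⟩ := hP2 p hp
      constructor
      · intro h
        exact hcp.1 (by show s = insert v p.1; rw [← h, Finset.insert_erase hv])
      · intro h
        exact hcp.2 (by show s = insert v p.2; rw [← h, Finset.insert_erase hv])
    · left
      exact ⟨⟨hs, hv⟩, fun p hp => hcrit p (Or.inl hp)⟩

/-- Independence complex restricted to vertices in `S`. -/
def cplx (G : SimpleGraph V) (S : Set V) : Set (Finset V) :=
  {s | IsIndepSet G s ∧ ↑s ⊆ S}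

lemma cplx_del (G : SimpleGraph V) (S : Set V) (u : V) :
    {s ∈ cplx G S | u ∉ s} = cplx G (S \ {u}) := by
  ext s
  constructor
  · rintro ⟨⟨hi, hsub⟩, hus⟩
    refine ⟨hi, fun x hx => ⟨hsub hx, ?_⟩⟩
    rintro rfl
    exact hus hx
  · rintro ⟨hi, hsub⟩
    refine ⟨⟨hi, fun x hx => (hsub hx).1⟩, fun hus => (hsub hus).2 rfl⟩

lemma cplx_link (G : SimpleGraph V) (S : Set V) (u : V) (hu : u ∈ S) :
    {s | u ∉ s ∧ insert u s ∈ cplx G S} = cplx G (S \ ({u} ∪ {x | G.Adj u x})) := by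
  ext s
  constructor
  · rintro ⟨hus, hi, hsub⟩
    refine ⟨fun x hx y hy => hi x (Finset.mem_insert_of_mem hx) y (Finset.mem_insert_of_mem hy),
      fun x hx => ⟨hsub (by simpa using Or.inr hx), ?_⟩⟩
    rintro (rfl | hadj)
    · exact hus hx
    · exact hi u (Finset.mem_insert_self _ _) x (Finset.mem_insert_of_mem hx) hadj
  · rintro ⟨hi, hsub⟩
    have hus : u ∉ s := fun h => (hsub h).2 (Or.inl rfl)
    refine ⟨hus, ?_, ?_⟩
    · intro x hx y hy
      rcases Finset.mem_insert.1 hx with rfl | hx' <;> rcases Finset.mem_insert.1 hy with rfl | hy'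
      · exact G.loopless.irrefl _
      · exact fun hadj => (hsub hy').2 (Or.inr hadj)
      · exact fun hadj => (hsub hx').2 (Or.inr (G.symm.symm _ _ hadj))
      · exact hi x hx' y hy'
    · intro x hx
      rcases Finset.mem_insert.1 (by simpa using hx) with rfl | hx'
      · exact hu
      · exact (hsub hx').1

lemma induce_acyclic_mono {G : SimpleGraph V} {A B : Set V} (h : A ⊆ B)
    (hB : (G.induce B).IsAcyclic) : (G.induce A).IsAcyclic := by
  intro a c hc
  have hinj : Function.Injective ⇑(SimpleGraph.induceHomOfLE G h).toHom :=
    (SimpleGraph.induceHomOfLE G h).injective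
  exact hB _ ((SimpleGraph.Walk.map_isCycle_iff_of_injective hinj).2 hc)

lemma exists_leaf {G : SimpleGraph V} [Finite V] {S : Set V}
    (hac : (G.induce S).IsAcyclic) (hS : S.Nonempty)
    (hdeg : ∀ v ∈ S, ∃ x ∈ S, G.Adj v x) :
    ∃ v ∈ S, ∃ w ∈ S, G.Adj v w ∧ ∀ x ∈ S, G.Adj v x → x = w := by
  haveI : Fintype ↥S := Fintype.ofFinite _
  set G' := G.induce S with hG'
  have hadjiff : ∀ a b : ↥S, G'.Adj a b ↔ G.Adj ↑a ↑b := by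
    intro a b
    simp [hG', SimpleGraph.comap_adj]
  set T : Set ℕ := {n | ∃ a b : ↥S, ∃ p : G'.Walk a b, p.IsPath ∧ p.length = n} with hT
  have hTne : T.Nonempty := by
    obtain ⟨a, ha⟩ := hS
    exact ⟨0, ⟨a, ha⟩, ⟨a, ha⟩, SimpleGraph.Walk.nil, SimpleGraph.Walk.IsPath.nil, rfl⟩
  have hTbdd : BddAbove T := by
    refine ⟨Fintype.card ↥S, ?_⟩
    rintro m ⟨a, b, p, hp, rfl⟩
    exact le_of_lt hp.length_lt
  obtain ⟨a, b, p, hp, hlen⟩ := Nat.sSup_mem hTne hTbdd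
  have hmax : ∀ m ∈ T, m ≤ sSup T := fun m hm => le_csSup hTbdd hm
  -- the start of a maximal path has a neighbour
  obtain ⟨x₀, hx₀, hadj₀⟩ := hdeg ↑a a.2
  have hadj₀' : G'.Adj a ⟨x₀, hx₀⟩ := (hadjiff _ _).2 hadj₀
  have hpos : 1 ≤ sSup T := by
    refine hmax 1 ⟨a, ⟨x₀, hx₀⟩, SimpleGraph.Walk.cons hadj₀' SimpleGraph.Walk.nil, ?_, rfl⟩
    rw [SimpleGraph.Walk.cons_isPath_iff]
    refine ⟨SimpleGraph.Walk.IsPath.nil, ?_⟩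
    simp [hadj₀'.ne]
  cases p with
  | nil => simp at hlen; omega
  | @cons _ d _ h q =>
    rw [SimpleGraph.Walk.cons_isPath_iff] at hp
    refine ⟨↑a, a.2, ↑d, d.2, (hadjiff _ _).1 h, ?_⟩
    intro x hx hadjx
    by_contra hxd
    set c : ↥S := ⟨x, hx⟩ with hc
    have hadjc : G'.Adj a c := (hadjiff _ _).2 hadjx
    have hcd : c ≠ d := fun hcon => hxd (congrArg Subtype.val hcon)
    by_cases hcs : c ∈ q.support
    · -- build a cycle
      have hr := hp.1.takeUntil hcs
      set r := q.takeUntil c hcs with hrdef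
      have har : a ∉ r.support := fun hcon =>
        hp.2 (SimpleGraph.Walk.support_takeUntil_subset _ hcs hcon)
      have hpath : (SimpleGraph.Walk.cons h r).IsPath := by
        rw [SimpleGraph.Walk.cons_isPath_iff]
        exact ⟨hr, har⟩
      have hcyc : (SimpleGraph.Walk.cons hadjc.symm (SimpleGraph.Walk.cons h r)).IsCycle := by
        rw [SimpleGraph.Walk.cons_isCycle_iff]
        refine ⟨hpath, ?_⟩
        rw [SimpleGraph.Walk.edges_cons, List.mem_cons]
        rintro (hcon | hcon)
        · rw [Sym2.eq_iff] at hcon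
          rcases hcon with ⟨rfl, rfl⟩ | ⟨h1, h2⟩
          · exact hadjc.ne rfl
          · exact hcd h1
        · exact har (SimpleGraph.Walk.snd_mem_support_of_mem_edges r hcon)
      exact hac _ hcyc
    · -- extend the maximal path
      have hcsup : c ∉ (SimpleGraph.Walk.cons h q).support := by
        rw [SimpleGraph.Walk.support_cons, List.mem_cons]
        rintro (hcon | hcon)
        · exact hadjc.ne' (by simpa using hcon)
        · exact hcs hcon
      have : (sSup T) + 1 ≤ sSup T := by
        have := hmax (sSup T + 1)
          ⟨c, b, SimpleGraph.Walk.cons hadjc.symm (SimpleGraph.Walk.cons h q), by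
            rw [SimpleGraph.Walk.cons_isPath_iff]
            exact ⟨by rw [SimpleGraph.Walk.cons_isPath_iff]; exact hp, hcsup⟩, by
            simp [SimpleGraph.Walk.length_cons, ← hlen]⟩
        exact this
      omega

lemma cplx_empty (G : SimpleGraph V) : cplx G (∅ : Set V) = {(∅ : Finset V)} := by
  ext s
  constructor
  · rintro ⟨hi, hsub⟩
    have : (↑s : Set V) = ∅ := Set.subset_empty_iff.1 hsub
    simpa using Finset.coe_eq_empty.1 this
  · rintro rfl
    exact ⟨fun x hx => absurd hx (Finset.notMem_empty x), by simp⟩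

lemma empty_S_case (G : SimpleGraph V) :
    ∃ P, IsAcyclicMatching (cplx G (∅ : Set V)) P ∧
      (criticalSet (cplx G (∅ : Set V)) P).ncard ≤ 1 := by
  refine ⟨∅, ⟨⟨fun p hp => absurd hp (Set.notMem_empty p),
    fun p hp => absurd hp (Set.notMem_empty p)⟩, ?_⟩, ?_⟩
  · rintro ⟨n, hn, f, hmem, -, -, -⟩
    exact Set.notMem_empty _ (hmem 0 (by omega))
  · have : criticalSet (cplx G (∅ : Set V)) ∅ = {(∅ : Finset V)} := by
      rw [← cplx_empty]
      ext s
      exact ⟨fun h => h.1, fun h => ⟨h, fun p hp => absurd hp (Set.notMem_empty p)⟩⟩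
    rw [this, Set.ncard_singleton]

lemma main_lemma (G : SimpleGraph V) [Finite V] :
    ∀ n (S U : Set V), S.ncard ≤ n → U ⊆ S → (G.induce (S \ U)).IsAcyclic →
    ∃ P, IsAcyclicMatching (cplx G S) P ∧
      (criticalSet (cplx G S) P).ncard ≤ 2 ^ U.ncard := by
  haveI : Finite (Finset V) :=
    Finite.of_injective (fun s : Finset V => (s : Set V)) (fun a b h => Finset.coe_injective h)
  intro n
  induction n with
  | zero =>
    intro S U hcard hUS _
    have hS : S = ∅ := by
      rw [← Set.ncard_eq_zero S.toFinite]; omega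
    have hU : U = ∅ := Set.subset_eq_empty hUS hS
    subst hS; subst hU
    simpa using empty_S_case G
  | succ n ih =>
    intro S U hcard hUS hac
    rcases U.eq_empty_or_nonempty with hUe | ⟨u, hu⟩
    · -- forest case
      subst hUe
      rw [Set.diff_empty] at hac
      simp only [Set.ncard_empty, pow_zero]
      by_cases hiso : ∃ v ∈ S, ∀ x ∈ S, ¬ G.Adj v x
      · obtain ⟨v, hvS, hviso⟩ := hiso
        have h1 : ∀ s ∈ cplx G S, v ∉ s → insert v s ∈ cplx G S := by
          rintro s ⟨hi, hsub⟩ hvs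
          refine ⟨?_, ?_⟩
          · intro x hx y hy
            rcases Finset.mem_insert.1 hx with rfl | hx' <;>
              rcases Finset.mem_insert.1 hy with rfl | hy'
            · exact G.loopless.irrefl _
            · exact hviso _ (hsub hy')
            · exact fun hadj => hviso _ (hsub hx') (G.symm.symm _ _ hadj)
            · exact hi x hx' y hy'
          · intro x hx
            rcases Finset.mem_insert.1 (by simpa using hx) with rfl | hx'
            · exact hvS
            · exact hsub hx'
        have h2 : ∀ s ∈ cplx G S, v ∈ s → s.erase v ∈ cplx G S := by
          rintro s ⟨hi, hsub⟩ _
          exact ⟨fun x hx y hy => hi x (Finset.mem_of_mem_erase hx) y (Finset.mem_of_mem_erase hy),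
            fun x hx => hsub (Finset.mem_coe.2 (Finset.mem_of_mem_erase (Finset.mem_coe.1 hx)))⟩
        obtain ⟨P, hP, hPc⟩ := iso_matching (cplx G S) v h1 h2
        exact ⟨P, hP, by rw [hPc]; simp⟩
      · push_neg at hiso
        rcases S.eq_empty_or_nonempty with hSe | hSne
        · subst hSe
          simpa using empty_S_case G
        · obtain ⟨v, hvS, w, hwS, hadj, huniq⟩ := exists_leaf hac hSne hiso
          have hvw : v ≠ w := hadj.ne
          -- perfect matching via v on the deletion of w
          have h1 : ∀ s ∈ cplx G (S \ {w}), v ∉ s → insert v s ∈ cplx G (S \ {w}) := by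
            rintro s ⟨hi, hsub⟩ hvs
            refine ⟨?_, ?_⟩
            · intro x hx y hy
              rcases Finset.mem_insert.1 hx with rfl | hx' <;>
                rcases Finset.mem_insert.1 hy with rfl | hy'
              · exact G.loopless.irrefl _
              · exact fun hadj' => (hsub hy').2 (huniq y (hsub hy').1 hadj')
              · exact fun hadj' => (hsub hx').2 (huniq x (hsub hx').1 (G.symm.symm _ _ hadj'))
              · exact hi x hx' y hy'
            · intro x hx
              rcases Finset.mem_insert.1 (by simpa using hx) with rfl | hx'
              · exact ⟨hvS, hvw⟩
              · exact hsub hx'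
          have h2 : ∀ s ∈ cplx G (S \ {w}), v ∈ s → s.erase v ∈ cplx G (S \ {w}) := by
            rintro s ⟨hi, hsub⟩ _
            exact ⟨fun x hx y hy =>
              hi x (Finset.mem_of_mem_erase hx) y (Finset.mem_of_mem_erase hy),
              fun x hx => hsub (Finset.mem_coe.2 (Finset.mem_of_mem_erase (Finset.mem_coe.1 hx)))⟩
          obtain ⟨P₁, hP₁, hP₁c⟩ := iso_matching (cplx G (S \ {w})) v h1 h2
          -- matching on the link of w : induction
          have hw2 : w ∉ S \ ({w} ∪ {x | G.Adj w x}) := fun hcon => hcon.2 (Or.inl rfl)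
          have hcard2 : (S \ ({w} ∪ {x | G.Adj w x})).ncard ≤ n := by
            have hss : S \ ({w} ∪ {x | G.Adj w x}) ⊂ S :=
              ⟨Set.diff_subset, fun hcon => hw2 (hcon hwS)⟩
            have := Set.ncard_lt_ncard hss S.toFinite
            omega
          have hac2 : (G.induce ((S \ ({w} ∪ {x | G.Adj w x})) \ (∅ : Set V))).IsAcyclic := by
            rw [Set.diff_empty]
            exact induce_acyclic_mono Set.diff_subset hac
          obtain ⟨P₂, hP₂, hP₂c⟩ := ih (S \ ({w} ∪ {x | G.Adj w x})) ∅ hcard2 (by simp) hac2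
          obtain ⟨P, hP, hPc⟩ := combine_matching (cplx G S) w P₁ P₂
            (by rwa [cplx_del]) (by rwa [cplx_link G S w hwS])
          refine ⟨P, hP, le_trans (Set.ncard_le_ncard hPc (Set.toFinite _)) ?_⟩
          refine le_trans (Set.ncard_union_le _ _) ?_
          rw [cplx_del G S w, cplx_link G S w hwS, hP₁c]
          simp only [Set.ncard_empty, zero_add]
          refine le_trans (Set.ncard_image_le (Set.toFinite _)) ?_
          simpa using hP₂c
    · -- delete a vertex of U
      have huS : u ∈ S := hUS hu
      have hu2 : u ∉ S \ ({u} ∪ {x | G.Adj u x}) := fun hcon => hcon.2 (Or.inl rfl)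
      -- first recursive call : S \ {u}, U \ {u}
      have hd1 : (S \ {u}) \ (U \ {u}) = S \ U := by
        ext x
        constructor
        · rintro ⟨⟨hxS, hxu⟩, hxU⟩
          exact ⟨hxS, fun hcon => hxU ⟨hcon, hxu⟩⟩
        · rintro ⟨hxS, hxU⟩
          have hxu : x ≠ u := by rintro rfl; exact hxU hu
          exact ⟨⟨hxS, hxu⟩, fun hcon => hxU hcon.1⟩
      have hcard1 : (S \ {u}).ncard ≤ n := by
        have hss : S \ {u} ⊂ S := ⟨Set.diff_subset, fun hcon => (hcon huS).2 rfl⟩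
        have := Set.ncard_lt_ncard hss S.toFinite
        omega
      obtain ⟨P₁, hP₁, hP₁c⟩ := ih (S \ {u}) (U \ {u}) hcard1 (Set.diff_subset_diff_left hUS)
        (by rw [hd1]; exact hac)
      -- second recursive call : link of u
      set S₂ := S \ ({u} ∪ {x | G.Adj u x}) with hS₂
      set U₂ := U ∩ S₂ with hU₂
      have hsub2 : S₂ \ U₂ ⊆ S \ U := by
        rintro x ⟨hxS₂, hxU₂⟩
        exact ⟨hxS₂.1, fun hcon => hxU₂ ⟨hcon, hxS₂⟩⟩
      have hcard2 : S₂.ncard ≤ n := by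
        have hss : S₂ ⊂ S := ⟨Set.diff_subset, fun hcon => hu2 (hcon huS)⟩
        have := Set.ncard_lt_ncard hss S.toFinite
        omega
      obtain ⟨P₂, hP₂, hP₂c⟩ := ih S₂ U₂ hcard2 Set.inter_subset_right
        (induce_acyclic_mono hsub2 hac)
      obtain ⟨P, hP, hPc⟩ := combine_matching (cplx G S) u P₁ P₂
        (by rwa [cplx_del]) (by rwa [cplx_link G S u huS])
      refine ⟨P, hP, le_trans (Set.ncard_le_ncard hPc (Set.toFinite _)) ?_⟩
      refine le_trans (Set.ncard_union_le _ _) ?_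
      rw [cplx_del G S u, cplx_link G S u huS]
      have hb2 : (criticalSet (cplx G S₂) P₂).ncard ≤ 2 ^ (U \ {u}).ncard := by
        refine le_trans hP₂c (Nat.pow_le_pow_right (by norm_num) ?_)
        apply Set.ncard_le_ncard ?_ (Set.toFinite _)
        rintro x ⟨hxU, hxS₂⟩
        exact ⟨hxU, fun hcon => hu2 (by rwa [show x = u from hcon] at hxS₂)⟩
      have himg : ((insert u) '' criticalSet (cplx G S₂) P₂).ncard
          ≤ 2 ^ (U \ {u}).ncard :=
        le_trans (Set.ncard_image_le (Set.toFinite _)) hb2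
      have hsum := add_le_add hP₁c himg
      have hucard : (U \ {u}).ncard + 1 = U.ncard :=
        Set.ncard_diff_singleton_add_one hu U.toFinite
      refine le_trans hsum ?_
      rw [← hucard, pow_succ]
      omega

/-- If deleting the vertex set `U` from `G` removes all cycles, then `c(G) ≤ 2^{|U|}`. -/
theorem statement_6 {V : Type*} [Finite V] (G : SimpleGraph V) (U : Set V)
    (h : (G.induce Uᶜ).IsAcyclic) :
    cInvariant G ≤ 2 ^ U.ncard := by
  have hfaces : IndFaces G = cplx G Set.univ := by
    ext s
    simp [IndFaces, cplx]
  have hac : (G.induce (Set.univ \ U)).IsAcyclic :=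
    induce_acyclic_mono (fun x hx => hx.2) h
  obtain ⟨P, hP, hPc⟩ := main_lemma G Set.univ.ncard Set.univ U le_rfl (Set.subset_univ U) hac
  refine le_trans (Nat.sInf_le ⟨P, ?_, rfl⟩) ?_
  · rwa [hfaces]
  · rwa [hfaces]
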